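/- Let w = (w_n)_{n≥1} be a bounded positive weight sequence with inf w_n > 0, S the associated forward shift on ℓ^p, and suppose there exist n_k → ∞ and s_k → ∞ such that M_{i+1}^{n_k} ≥ 1/2 for i ≥ s_k and M_{i+1}^{n_k} ≥ 2^k for 0 ≤ i < s_k. Then ‖S^{n_k} x‖ → 0 as k → ∞ for every x ∈ ℓ^p. -/

import Mathlib

open Filter Finset

private lemma stmt17_cmp {p : ENNReal} [Fact (1 ≤ p)] (hp : 0 < p.toReal)
    (f g : lp (fun _ : ℕ => ℂ) p) {C : ℝ} (hC : 0 ≤ C) (n : ℕ)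
    (h0 : ∀ j, j < n → (f j : ℂ) = 0)
    (h : ∀ i, ‖f (n + i)‖ ≤ C * ‖g i‖) : ‖f‖ ≤ C * ‖g‖ := by
  refine lp.norm_le_of_tsum_le (f := f) hp (mul_nonneg hC (norm_nonneg g)) ?_
  have hinj : Function.Injective (fun i : ℕ => n + i) := fun a b hab => by
    simp only at hab; omega
  have hzero : Function.support (fun j => ‖f j‖ ^ p.toReal) ⊆
      Set.range (fun i : ℕ => n + i) := by
    intro j hj
    by_contra hc
    have hjn : j < n := by
      by_contra h2
      push_neg at h2
      exact hc ⟨j - n, show n + (j - n) = j by omega⟩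
    exact hj (by dsimp only; rw [h0 j hjn, norm_zero, Real.zero_rpow hp.ne'])
  have heq : ∑' i : ℕ, ‖f (n + i)‖ ^ p.toReal = ∑' j, ‖f j‖ ^ p.toReal :=
    hinj.tsum_eq hzero
  have hfs : Summable (fun i : ℕ => ‖f (n + i)‖ ^ p.toReal) :=
    ((lp.memℓp f).summable hp).comp_injective hinj
  have hgs : Summable (fun i : ℕ => ‖g i‖ ^ p.toReal) := (lp.memℓp g).summable hp
  have h1 : ∀ i, ‖f (n + i)‖ ^ p.toReal ≤ C ^ p.toReal * ‖g i‖ ^ p.toReal := by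
    intro i
    rw [← Real.mul_rpow hC (norm_nonneg _)]
    exact Real.rpow_le_rpow (norm_nonneg _) (h i) hp.le
  calc ∑' j, ‖f j‖ ^ p.toReal = ∑' i : ℕ, ‖f (n + i)‖ ^ p.toReal := heq.symm
    _ ≤ ∑' i : ℕ, C ^ p.toReal * ‖g i‖ ^ p.toReal :=
        hfs.tsum_le_tsum h1 (hgs.mul_left _)
    _ = C ^ p.toReal * ∑' i, ‖g i‖ ^ p.toReal := tsum_mul_left
    _ = (C * ‖g‖) ^ p.toReal := by
        rw [Real.mul_rpow hC (norm_nonneg g), lp.norm_rpow_eq_tsum hp g]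

set_option maxHeartbeats 1000000 in
theorem stmt_17 (p : ENNReal) [Fact (1 ≤ p)] (hp : p ≠ ⊤)
    (w : ℕ → ℝ) (hpos : ∀ n, 1 ≤ n → 0 < w n)
    (hbdd : ∃ C : ℝ, ∀ n, 1 ≤ n → w n ≤ C)
    (hinf : ∃ c : ℝ, 0 < c ∧ ∀ n, 1 ≤ n → c ≤ w n)
    (S : lp (fun _ : ℕ => ℂ) p →L[ℂ] lp (fun _ : ℕ => ℂ) p)
    (hS0 : ∀ x : lp (fun _ : ℕ => ℂ) p, S x 0 = 0)
    (hS : ∀ (x : lp (fun _ : ℕ => ℂ) p) (n : ℕ), S x (n + 1) = x n / (w (n + 1) : ℂ))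
    (nk sk : ℕ → ℕ)
    (hnk : Filter.Tendsto nk Filter.atTop Filter.atTop)
    (hsk : Filter.Tendsto sk Filter.atTop Filter.atTop)
    (htail : ∀ k i, sk k ≤ i → (1:ℝ)/2 ≤ ∏ t ∈ Finset.range (nk k), w (i + 1 + t))
    (hfront : ∀ k i, i < sk k → (2:ℝ)^k ≤ ∏ t ∈ Finset.range (nk k), w (i + 1 + t)) :
    ∀ x : lp (fun _ : ℕ => ℂ) p,
      Filter.Tendsto (fun k => ‖(⇑S)^[nk k] x‖) Filter.atTop (nhds 0) := by
  intro x
  have hp1 : 1 ≤ p := Fact.out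
  have hp0 : 0 < p.toReal :=
    ENNReal.toReal_pos (lt_of_lt_of_le zero_lt_one hp1).ne' hp
  -- coordinates of the iterate
  have key : ∀ n (y : lp (fun _ : ℕ => ℂ) p),
      (∀ j, j < n → (⇑S)^[n] y j = 0) ∧
      (∀ i, (⇑S)^[n] y (n + i) = y i / (∏ t ∈ Finset.range n, (w (i + 1 + t) : ℂ))) := by
    intro n
    induction n with
    | zero =>
      intro y
      exact ⟨fun j hj => absurd hj (Nat.not_lt_zero j), fun i => by simp⟩
    | succ n ih =>
      intro y
      constructor
      · intro j hj
        rw [Function.iterate_succ_apply']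
        match j, hj with
        | 0, _ => exact hS0 _
        | j + 1, hj =>
          rw [hS, (ih y).1 j (by omega), zero_div]
      · intro i
        rw [Function.iterate_succ_apply']
        have e : n + 1 + i = (n + i) + 1 := by omega
        rw [e, hS, (ih y).2 i, Finset.prod_range_succ]
        have e2 : n + i + 1 = i + 1 + n := by omega
        rw [e2, div_div]
  have Mpos : ∀ n i, 0 < ∏ t ∈ Finset.range n, w (i + 1 + t) := fun n i =>
    Finset.prod_pos fun t _ => hpos _ (by omega)
  have keynorm : ∀ n (y : lp (fun _ : ℕ => ℂ) p) i,
      ‖(⇑S)^[n] y (n + i)‖ = ‖y i‖ / (∏ t ∈ Finset.range n, w (i + 1 + t)) := by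
    intro n y i
    rw [(key n y).2 i, norm_div]
    congr 1
    have : (∏ t ∈ Finset.range n, (w (i + 1 + t) : ℂ))
        = ((∏ t ∈ Finset.range n, w (i + 1 + t) : ℝ) : ℂ) := by push_cast; rfl
    rw [this, Complex.norm_real, Real.norm_of_nonneg (Mpos n i).le]
  -- coordinates of the partial sums
  have hcoordh : ∀ m j, ((∑ i ∈ Finset.range m, lp.single p i (x i)) : lp (fun _ : ℕ => ℂ) p) j
      = if j < m then x j else 0 := by
    intro m j
    rw [lp.coeFn_sum, Finset.sum_apply]
    by_cases hj : j < m
    · rw [if_pos hj]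
      have hz : ∀ b ∈ Finset.range m, b ≠ j →
          (lp.single p b ((x : ∀ _ : ℕ, ℂ) b) : ∀ _ : ℕ, ℂ) j = 0 := fun b _ hbj =>
        lp.single_apply_ne p b _ (Ne.symm hbj)
      rw [Finset.sum_eq_single_of_mem j (Finset.mem_range.2 hj) hz]
      exact lp.single_apply_self p j _
    · rw [if_neg hj]
      refine Finset.sum_eq_zero fun i hi => lp.single_apply_ne p i _ ?_
      rw [Finset.mem_range] at hi
      omega
  set T : ℕ → ℝ := fun k => ‖x - ∑ i ∈ Finset.range (sk k), lp.single p i (x i)‖ with hTdef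
  -- the tails tend to 0 in norm
  have htnorm : Tendsto (fun m => ‖x - ∑ i ∈ Finset.range m, lp.single p i (x i)‖)
      atTop (nhds 0) := by
    have h1 := (lp.hasSum_single hp x).tendsto_sum_nat
    have h2 := (tendsto_const_nhds (x := x)).sub h1
    simpa using h2.norm
  have hT : Tendsto T atTop (nhds 0) := htnorm.comp hsk
  -- the key bound
  have hbound : ∀ k, ‖(⇑S)^[nk k] x‖ ≤ ((1:ℝ)/2)^k * (‖x‖ + T k) + 2 * T k := by
    intro k
    set H : lp (fun _ : ℕ => ℂ) p := ∑ i ∈ Finset.range (sk k), lp.single p i (x i) with hHdef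
    set t : lp (fun _ : ℕ => ℂ) p := x - H with htdef
    have hHt : H + t = x := by simp [htdef]
    have hco : ∀ j, t j = if j < sk k then 0 else x j := by
      intro j
      have : t j = x j - H j := rfl
      rw [this, hcoordh]
      by_cases hj : j < sk k <;> simp [hj]
    -- bound on the head
    have hA : ‖(⇑S)^[nk k] H‖ ≤ ((1:ℝ)/2)^k * ‖H‖ := by
      refine stmt17_cmp hp0 _ _ (by positivity) (nk k) ((key (nk k) H).1) ?_
      intro i
      rw [keynorm]
      by_cases hi : i < sk k
      · calc ‖H i‖ / ∏ t ∈ Finset.range (nk k), w (i + 1 + t)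
            ≤ ‖H i‖ / (2:ℝ)^k :=
              div_le_div_of_nonneg_left (norm_nonneg _) (by positivity) (hfront k i hi)
          _ = ((1:ℝ)/2)^k * ‖H i‖ := by
              rw [one_div, inv_pow, div_eq_mul_inv, mul_comm]
      · have : H i = 0 := by rw [hcoordh, if_neg hi]
        rw [this, norm_zero, zero_div]
        positivity
    -- bound on the tail
    have hB : ‖(⇑S)^[nk k] t‖ ≤ 2 * ‖t‖ := by
      refine stmt17_cmp hp0 _ _ (by norm_num) (nk k) ((key (nk k) t).1) ?_
      intro i
      rw [keynorm]
      by_cases hi : i < sk k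
      · have : t i = 0 := by rw [hco, if_pos hi]
        rw [this, norm_zero, zero_div]
        positivity
      · push_neg at hi
        calc ‖t i‖ / ∏ s ∈ Finset.range (nk k), w (i + 1 + s)
            ≤ ‖t i‖ / ((1:ℝ)/2) :=
              div_le_div_of_nonneg_left (norm_nonneg _) (by norm_num) (htail k i hi)
          _ = 2 * ‖t i‖ := by ring
    have hsplit : (⇑S)^[nk k] x = (⇑S)^[nk k] H + (⇑S)^[nk k] t := by
      rw [← hHt, ← FunLike.coe_pow_eq_iterate, map_add]
    have hHle : ‖H‖ ≤ ‖x‖ + T k := by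
      have : H = x - t := by rw [htdef]; abel
      rw [this]
      calc ‖x - t‖ ≤ ‖x‖ + ‖t‖ := norm_sub_le x t
        _ = ‖x‖ + T k := rfl
    calc ‖(⇑S)^[nk k] x‖ = ‖(⇑S)^[nk k] H + (⇑S)^[nk k] t‖ := by rw [hsplit]
      _ ≤ ‖(⇑S)^[nk k] H‖ + ‖(⇑S)^[nk k] t‖ := norm_add_le _ _
      _ ≤ ((1:ℝ)/2)^k * ‖H‖ + 2 * ‖t‖ := add_le_add hA hB
      _ ≤ ((1:ℝ)/2)^k * (‖x‖ + T k) + 2 * T k := by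
          refine add_le_add (mul_le_mul_of_nonneg_left hHle (by positivity)) (le_of_eq rfl)
  have hhalf : Tendsto (fun k : ℕ => ((1:ℝ)/2)^k) atTop (nhds 0) :=
    tendsto_pow_atTop_nhds_zero_of_lt_one (by norm_num) (by norm_num)
  have hlim : Tendsto (fun k => ((1:ℝ)/2)^k * (‖x‖ + T k) + 2 * T k) atTop (nhds 0) := by
    have h1 := (hhalf.mul ((tendsto_const_nhds (x := ‖x‖)).add hT)).add (hT.const_mul 2)
    rw [show (0:ℝ) * (‖x‖ + 0) + 2 * 0 = 0 by ring] at h1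
    exact h1
  exact squeeze_zero (fun k => norm_nonneg _) hbound hlim
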